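/- Let (θ_{ij})_{1≤i,j≤N} be i.i.d. Bernoulli(p) random variables. Then E[ ( Σ_{i=1}^K Σ_{j=1}^K Σ_{m=1}^N Σ_{n=1}^N (θ_{ij}−p)(θ_{jm}−p)(θ_{in}−p) )² ] ≤ C K² N², where C depends only on p. -/

import Mathlib

open MeasureTheory ProbabilityTheory Finset

/-- The Bernoulli(p) law on ℝ: mass p at 1 and mass 1−p at 0. -/
noncomputable def bernoulliLaw (p : ℝ) : Measure ℝ :=
  ENNReal.ofReal p • Measure.dirac (1 : ℝ) + ENNReal.ofReal (1 - p) • Measure.dirac (0 : ℝ)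

set_option maxHeartbeats 2000000
set_option linter.unusedSectionVars false
set_option linter.unusedVariables false

section BMhelpers

variable {Ω : Type} [MeasurableSpace Ω] {P : Measure Ω} [IsProbabilityMeasure P]
variable {ι : Type*} [DecidableEq ι]

lemma bm_integrable_prod {Y : ι → Ω → ℝ} (hY : ∀ q, Measurable (Y q))
    (hbd : ∀ q, ∀ᵐ ω ∂P, |Y q ω| ≤ 1)
    (s : Finset ι) : Integrable (fun ω => ∏ q ∈ s, Y q ω) P := by
  have hb : ∀ᵐ ω ∂P, ∀ q ∈ s, |Y q ω| ≤ 1 :=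
    (ae_ball_iff s.countable_toSet).2 fun q _ => hbd q
  refine Integrable.mono' (integrable_const 1) ?_ ?_
  · exact (Finset.measurable_prod s fun q _ => hY q).aestronglyMeasurable
  · filter_upwards [hb] with ω h
    calc ‖∏ q ∈ s, Y q ω‖ = |∏ q ∈ s, Y q ω| := rfl
    _ = ∏ q ∈ s, |Y q ω| := Finset.abs_prod _ _
    _ ≤ 1 := Finset.prod_le_one (fun q _ => abs_nonneg _) fun q hq => h q hq

lemma bm_integral_prod {Y : ι → Ω → ℝ} (hY : ∀ q, Measurable (Y q))
    (hindep : iIndepFun Y P)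
    (hbd : ∀ q, ∀ᵐ ω ∂P, |Y q ω| ≤ 1) (s : Finset ι) :
    ∫ ω, ∏ q ∈ s, Y q ω ∂P = ∏ q ∈ s, ∫ ω, Y q ω ∂P := by
  classical
  induction s using Finset.induction_on with
  | empty => simp
  | insert a s ha ih =>
    rw [Finset.prod_insert ha]
    have h1 : IndepFun (Y a) (fun ω => ∏ q ∈ s, Y q ω) P := by
      have := (hindep.indepFun_finsetProd_of_notMem hY ha).symm
      convert this using 1
      funext ω; simp [Finset.prod_apply]
    have h2 : ∫ ω, Y a ω * ∏ q ∈ s, Y q ω ∂P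
        = (∫ ω, Y a ω ∂P) * ∫ ω, ∏ q ∈ s, Y q ω ∂P := by
      have := h1.integral_fun_mul_eq_mul_integral
        (Integrable.aestronglyMeasurable (by
          refine Integrable.mono' (integrable_const 1) ((hY a).aestronglyMeasurable) ?_
          filter_upwards [hbd a] with ω h; simpa using h))
        (bm_integrable_prod hY hbd s).aestronglyMeasurable
      simpa using this
    simp_rw [Finset.prod_insert ha] at *
    rw [h2, ih]

variable {X : ι → Ω → ℝ}

lemma bm_Tfact (hX : ∀ q, Measurable (X q))
    (hindep : iIndepFun X P)
    (hbd : ∀ q, ∀ᵐ ω ∂P, |X q ω| ≤ 1) (f : Fin 6 → ι) :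
    ∫ ω, ∏ k, X (f k) ω ∂P
      = ∏ q ∈ Finset.image f Finset.univ,
          ∫ ω, (X q ω) ^ ((Finset.univ.filter (fun k => f k = q)).card) ∂P := by
  classical
  have hrw : (fun ω => ∏ k, X (f k) ω)
      = fun ω => ∏ q ∈ Finset.image f Finset.univ,
          (X q ω) ^ ((Finset.univ.filter (fun k => f k = q)).card) := by
    funext ω
    exact Finset.prod_comp (fun q => X q ω) f
  rw [hrw]
  set m : ι → ℕ := fun q => (Finset.univ.filter (fun k => f k = q)).card with hm
  have hY : ∀ q, Measurable (fun ω => (X q ω) ^ m q) := fun q => (hX q).pow_const _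
  have hYindep : iIndepFun (fun q ω => (X q ω) ^ m q) P := by
    have := hindep.comp (fun q (x : ℝ) => x ^ m q) (fun q => measurable_id.pow_const _)
    exact this
  have hYbd : ∀ q, ∀ᵐ ω ∂P, |(X q ω) ^ m q| ≤ 1 := by
    intro q; filter_upwards [hbd q] with ω h
    rw [abs_pow]; exact pow_le_one₀ (abs_nonneg _) h
  exact bm_integral_prod hY hYindep hYbd _

lemma bm_Tzero (hX : ∀ q, Measurable (X q))
    (hindep : iIndepFun X P)
    (hbd : ∀ q, ∀ᵐ ω ∂P, |X q ω| ≤ 1)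
    (hzero : ∀ q, ∫ ω, X q ω ∂P = 0)
    (f : Fin 6 → ι) (k : Fin 6) (hk : ∀ k', f k' = f k → k' = k) :
    ∫ ω, ∏ k, X (f k) ω ∂P = 0 := by
  classical
  rw [bm_Tfact hX hindep hbd f]
  apply Finset.prod_eq_zero (Finset.mem_image_of_mem f (Finset.mem_univ k))
  have hfil : Finset.univ.filter (fun k' => f k' = f k) = {k} := by
    ext k'; simp only [Finset.mem_filter, Finset.mem_univ, true_and, Finset.mem_singleton]
    exact ⟨fun h => hk k' h, fun h => h ▸ rfl⟩
  rw [hfil]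
  simpa using hzero (f k)

lemma bm_Tbound (hX : ∀ q, Measurable (X q))
    (hbd : ∀ q, ∀ᵐ ω ∂P, |X q ω| ≤ 1) (f : Fin 6 → ι) :
    |∫ ω, ∏ k, X (f k) ω ∂P| ≤ 1 := by
  have hint : Integrable (fun ω => ∏ k, X (f k) ω) P :=
    bm_integrable_prod (fun k => hX (f k)) (fun k => hbd (f k)) Finset.univ
  have hb : ∀ᵐ ω ∂P, ∀ k : Fin 6, |X (f k) ω| ≤ 1 := by
    rw [ae_all_iff]; exact fun k => hbd (f k)
  calc |∫ ω, ∏ k, X (f k) ω ∂P| ≤ ∫ ω, |∏ k, X (f k) ω| ∂P := by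
        have := norm_integral_le_integral_norm (μ := P) (fun ω => ∏ k, X (f k) ω)
        simp only [Real.norm_eq_abs] at this
        exact this
  _ ≤ ∫ _ω, (1:ℝ) ∂P := by
        refine integral_mono_ae hint.abs (integrable_const 1) ?_
        filter_upwards [hb] with ω h
        rw [Finset.abs_prod]
        exact Finset.prod_le_one (fun q _ => abs_nonneg _) fun q _ => h q
  _ = 1 := by simp

end BMhelpers

section BMcount

variable {α : Type*} [DecidableEq α]

def bmTag (j j' vz wz x : α) : Fin 4 :=
  if x = j then 0 else if x = j' then 1 else if x = vz then 2 else 3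

lemma bmTag_inj (j j' v1 w1 v2 w2 x y : α) (hv : v1 = v2) (hw : w1 = w2)
    (hx : x = j ∨ x = j' ∨ x = v1 ∨ x = w1)
    (hy : y = j ∨ y = j' ∨ y = v2 ∨ y = w2)
    (ht : bmTag j j' v1 w1 x = bmTag j j' v2 w2 y) : x = y := by
  subst hv; subst hw
  unfold bmTag at ht
  split_ifs at ht <;> simp_all

variable [Fintype α]

lemma bm_count (j j' : α) (S : Finset ((α × α) × α × α)) (v w : ((α × α) × α × α) → α)
    (key : ∀ z ∈ S,
      (z.1.1 = j ∨ z.1.1 = j' ∨ z.1.1 = v z ∨ z.1.1 = w z) ∧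
      (z.1.2 = j ∨ z.1.2 = j' ∨ z.1.2 = v z ∨ z.1.2 = w z) ∧
      (z.2.1 = j ∨ z.2.1 = j' ∨ z.2.1 = v z ∨ z.2.1 = w z) ∧
      (z.2.2 = j ∨ z.2.2 = j' ∨ z.2.2 = v z ∨ z.2.2 = w z)) :
    S.card ≤ 256 * (Fintype.card α)^2 := by
  classical
  set φ : ((α×α)×α×α) → (α × α) × (Fin 4 × Fin 4 × Fin 4 × Fin 4) := fun z =>
    ((v z, w z), (bmTag j j' (v z) (w z) z.1.1, bmTag j j' (v z) (w z) z.1.2,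
      bmTag j j' (v z) (w z) z.2.1, bmTag j j' (v z) (w z) z.2.2)) with hφ
  have hinj : Set.InjOn φ S := by
    intro z1 h1 z2 h2 heq
    obtain ⟨k1a, k1b, k1c, k1d⟩ := key z1 h1
    obtain ⟨k2a, k2b, k2c, k2d⟩ := key z2 h2
    have hveq : v z1 = v z2 := congrArg (fun t => t.1.1) heq
    have hweq : w z1 = w z2 := congrArg (fun t => t.1.2) heq
    have t1 := congrArg (fun t => t.2.1) heq
    have t2 := congrArg (fun t => t.2.2.1) heq
    have t3 := congrArg (fun t => t.2.2.2.1) heq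
    have t4 := congrArg (fun t => t.2.2.2.2) heq
    simp only [hφ] at t1 t2 t3 t4
    exact Prod.ext (Prod.ext (bmTag_inj j j' _ _ _ _ _ _ hveq hweq k1a k2a t1)
        (bmTag_inj j j' _ _ _ _ _ _ hveq hweq k1b k2b t2))
      (Prod.ext (bmTag_inj j j' _ _ _ _ _ _ hveq hweq k1c k2c t3)
        (bmTag_inj j j' _ _ _ _ _ _ hveq hweq k1d k2d t4))
  calc S.card ≤ ((univ : Finset ((α × α) × (Fin 4 × Fin 4 × Fin 4 × Fin 4)))).card :=
        Finset.card_le_card_of_injOn φ (fun z _ => mem_univ _) hinj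
  _ = 256 * (Fintype.card α)^2 := by
        simp [Fintype.card_prod]; ring

lemma bm_logic (j j' m n m' n' w : α)
    (c2 : n = j ∨ n = j' ∨ n = m ∨ n = m' ∨ n = n')
    (c3 : m' = j ∨ m' = j' ∨ m' = m ∨ m' = n ∨ m' = n')
    (c4 : n' = j ∨ n' = j' ∨ n' = m ∨ n' = n ∨ n' = m')
    (hwp : (n = j ∨ n = j' ∨ n = m) → w = m')
    (hwn : ¬(n = j ∨ n = j' ∨ n = m) → w = n) :
    (m = j ∨ m = j' ∨ m = m ∨ m = w) ∧
    (n = j ∨ n = j' ∨ n = m ∨ n = w) ∧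
    (m' = j ∨ m' = j' ∨ m' = m ∨ m' = w) ∧
    (n' = j ∨ n' = j' ∨ n' = m ∨ n' = w) := by
  by_cases hb : n = j ∨ n = j' ∨ n = m
  · have hw : w = m' := hwp hb
    have hngoal : n = j ∨ n = j' ∨ n = m ∨ n = w := by
      rcases hb with h|h|h
      exacts [Or.inl h, Or.inr (Or.inl h), Or.inr (Or.inr (Or.inl h))]
    refine ⟨Or.inr (Or.inr (Or.inl rfl)), hngoal, Or.inr (Or.inr (Or.inr hw.symm)), ?_⟩
    rcases c4 with h|h|h|h|h
    · exact Or.inl h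
    · exact Or.inr (Or.inl h)
    · exact Or.inr (Or.inr (Or.inl h))
    · rcases hb with h2|h2|h2
      · exact Or.inl (h.trans h2)
      · exact Or.inr (Or.inl (h.trans h2))
      · exact Or.inr (Or.inr (Or.inl (h.trans h2)))
    · exact Or.inr (Or.inr (Or.inr (h.trans hw.symm)))
  · have hn : n = w := (hwn hb).symm
    push_neg at hb
    have hm'4 : m' = j ∨ m' = j' ∨ m' = m ∨ m' = w := by
      rcases c3 with h|h|h|h|h
      · exact Or.inl h
      · exact Or.inr (Or.inl h)
      · exact Or.inr (Or.inr (Or.inl h))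
      · exact Or.inr (Or.inr (Or.inr (h.trans hn)))
      · rcases c2 with h2|h2|h2|h2|h2
        · exact absurd h2 hb.1
        · exact absurd h2 hb.2.1
        · exact absurd h2 hb.2.2
        · exact Or.inr (Or.inr (Or.inr (h2.symm.trans hn)))
        · exact Or.inr (Or.inr (Or.inr ((h.trans h2.symm).trans hn)))
    refine ⟨Or.inr (Or.inr (Or.inl rfl)), Or.inr (Or.inr (Or.inr hn)), hm'4, ?_⟩
    rcases c4 with h|h|h|h|h
    · exact Or.inl h
    · exact Or.inr (Or.inl h)
    · exact Or.inr (Or.inr (Or.inl h))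
    · exact Or.inr (Or.inr (Or.inr (h.trans hn)))
    · rcases hm'4 with h2|h2|h2|h2
      · exact Or.inl (h.trans h2)
      · exact Or.inr (Or.inl (h.trans h2))
      · exact Or.inr (Or.inr (Or.inl (h.trans h2)))
      · exact Or.inr (Or.inr (Or.inr (h.trans h2)))

lemma bm_cardU (j j' : α) :
    (((univ : Finset ((α × α) × α × α))).filter (fun z =>
      (z.1.1 = j ∨ z.1.1 = j' ∨ z.1.1 = z.1.2 ∨ z.1.1 = z.2.1 ∨ z.1.1 = z.2.2) ∧
      (z.1.2 = j ∨ z.1.2 = j' ∨ z.1.2 = z.1.1 ∨ z.1.2 = z.2.1 ∨ z.1.2 = z.2.2) ∧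
      (z.2.1 = j ∨ z.2.1 = j' ∨ z.2.1 = z.1.1 ∨ z.2.1 = z.1.2 ∨ z.2.1 = z.2.2) ∧
      (z.2.2 = j ∨ z.2.2 = j' ∨ z.2.2 = z.1.1 ∨ z.2.2 = z.1.2 ∨ z.2.2 = z.2.1))).card
      ≤ 256 * (Fintype.card α)^2 := by
  classical
  refine bm_count j j' _ (fun z => z.1.1)
    (fun z => if z.1.2 = j ∨ z.1.2 = j' ∨ z.1.2 = z.1.1 then z.2.1 else z.1.2) ?_
  intro z hz
  simp only [mem_filter, mem_univ, true_and] at hz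
  exact bm_logic j j' z.1.1 z.1.2 z.2.1 z.2.2 _ hz.2.1 hz.2.2.1 hz.2.2.2
    (fun h => if_pos h) (fun h => if_neg h)

lemma bm_cardLine (j : α) :
    (((univ : Finset ((α × α) × α × α))).filter
      (fun z => z.1.2 = j ∧ z.2.2 = j ∧ z.2.1 = z.1.1)).card ≤ Fintype.card α := by
  classical
  have := Finset.card_le_card_of_injOn (f := fun z : (α × α) × α × α => z.1.1)
    (s := ((univ : Finset ((α × α) × α × α))).filter
      (fun z => z.1.2 = j ∧ z.2.2 = j ∧ z.2.1 = z.1.1))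
    (t := univ) (fun z _ => mem_univ _) ?_
  · simpa using this
  · intro z1 h1 z2 h2 heq
    simp only [coe_filter, Set.mem_setOf_eq, mem_univ, true_and] at h1 h2
    obtain ⟨a1, b1, c1⟩ := h1
    obtain ⟨a2, b2, c2⟩ := h2
    refine Prod.ext (Prod.ext heq (a1.trans a2.symm)) (Prod.ext ?_ (b1.trans b2.symm))
    rw [c1, c2]; exact heq

lemma bm_cardA (F : Finset α) :
    ((((F ×ˢ F) ×ˢ (F ×ˢ F))).filter
      (fun z => ((z.1.2 = z.1.1 ∨ z.1.2 = z.2.1) ∧ (z.2.2 = z.1.1 ∨ z.2.2 = z.2.1)) ∨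
        (z.1.1 = z.2.1 ∧ z.1.2 = z.2.2))).card ≤ 8 * F.card^2 := by
  classical
  set S := (((F ×ˢ F) ×ˢ (F ×ˢ F))).filter
      (fun z => ((z.1.2 = z.1.1 ∨ z.1.2 = z.2.1) ∧ (z.2.2 = z.1.1 ∨ z.2.2 = z.2.1)) ∨
        (z.1.1 = z.2.1 ∧ z.1.2 = z.2.2)) with hS
  set φ : ((α × α) × α × α) → (α × α) × (Bool × Bool × Bool) := fun z =>
    if (z.1.2 = z.1.1 ∨ z.1.2 = z.2.1) ∧ (z.2.2 = z.1.1 ∨ z.2.2 = z.2.1) then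
      ((z.1.1, z.2.1), (true, decide (z.1.2 = z.1.1), decide (z.2.2 = z.1.1)))
    else ((z.1.1, z.1.2), (false, true, true)) with hφ
  have hmaps : ∀ z ∈ S, φ z ∈ (F ×ˢ F) ×ˢ (univ : Finset (Bool × Bool × Bool)) := by
    intro z hz
    simp only [hS, mem_filter, mem_product] at hz
    obtain ⟨⟨⟨hi, hj⟩, hi', hj'⟩, _⟩ := hz
    simp only [hφ]
    split_ifs <;> simp [mem_product, hi, hj, hi']
  have hinj : Set.InjOn φ S := by
    intro z1 hz1 z2 hz2 heq
    have hz1' := hz1; have hz2' := hz2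
    simp only [hS, coe_filter, Set.mem_setOf_eq, mem_product] at hz1' hz2'
    obtain ⟨-, hc1⟩ := hz1'
    obtain ⟨-, hc2⟩ := hz2'
    simp only [hφ] at heq
    by_cases h1 : (z1.1.2 = z1.1.1 ∨ z1.1.2 = z1.2.1) ∧ (z1.2.2 = z1.1.1 ∨ z1.2.2 = z1.2.1) <;>
      by_cases h2 : (z2.1.2 = z2.1.1 ∨ z2.1.2 = z2.2.1) ∧ (z2.2.2 = z2.1.1 ∨ z2.2.2 = z2.2.1)
    · rw [if_pos h1, if_pos h2] at heq
      simp only [Prod.mk.injEq] at heq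
      obtain ⟨⟨e1, e3⟩, -, d1, d2⟩ := heq
      have e2 : z1.1.2 = z2.1.2 := by
        by_cases hc : z1.1.2 = z1.1.1
        · rw [hc] at d1 ⊢
          have : z2.1.2 = z2.1.1 := by simpa [hc] using d1.symm
          rw [this, e1]
        · have hcc : ¬ z2.1.2 = z2.1.1 := by
            intro hx; rw [decide_eq_true_iff.2 hx] at d1
            exact hc (decide_eq_true_iff.1 d1)
          have j1 : z1.1.2 = z1.2.1 := h1.1.resolve_left hc
          have j2 : z2.1.2 = z2.2.1 := h2.1.resolve_left hcc
          rw [j1, j2, e3]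
      have e4 : z1.2.2 = z2.2.2 := by
        by_cases hc : z1.2.2 = z1.1.1
        · rw [hc] at d2 ⊢
          have : z2.2.2 = z2.1.1 := by simpa [hc] using d2.symm
          rw [this, e1]
        · have hcc : ¬ z2.2.2 = z2.1.1 := by
            intro hx; rw [decide_eq_true_iff.2 hx] at d2
            exact hc (decide_eq_true_iff.1 d2)
          have j1 : z1.2.2 = z1.2.1 := h1.2.resolve_left hc
          have j2 : z2.2.2 = z2.2.1 := h2.2.resolve_left hcc
          rw [j1, j2, e3]
      exact Prod.ext (Prod.ext e1 e2) (Prod.ext e3 e4)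
    · rw [if_pos h1, if_neg h2] at heq
      simp only [Prod.mk.injEq] at heq
      exact absurd heq.2.1 (by simp)
    · rw [if_neg h1, if_pos h2] at heq
      simp only [Prod.mk.injEq] at heq
      exact absurd heq.2.1 (by simp)
    · rw [if_neg h1, if_neg h2] at heq
      simp only [Prod.mk.injEq] at heq
      obtain ⟨⟨e1, e2⟩, -⟩ := heq
      have g1 := hc1.resolve_left h1
      have g2 := hc2.resolve_left h2
      refine Prod.ext (Prod.ext e1 e2) (Prod.ext ?_ ?_)
      · rw [← g1.1, ← g2.1, e1]
      · rw [← g1.2, ← g2.2, e2]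
  calc S.card ≤ ((F ×ˢ F) ×ˢ (univ : Finset (Bool × Bool × Bool))).card :=
        Finset.card_le_card_of_injOn φ hmaps hinj
  _ = 8 * F.card ^ 2 := by
      simp [Finset.card_product]; ring

lemma bm_cardB (F : Finset α) :
    ((((F ×ˢ F) ×ˢ (F ×ˢ F))).filter
      (fun z => z.1.2 = z.2.2 ∧ ¬(z.1.2 = z.1.1) ∧ ¬(z.1.2 = z.2.1) ∧ ¬(z.1.1 = z.2.1))).card
      ≤ F.card^3 := by
  classical
  have := Finset.card_le_card_of_injOn
    (f := fun z : (α × α) × α × α => (z.1, z.2.1))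
    (s := (((F ×ˢ F) ×ˢ (F ×ˢ F))).filter
      (fun z => z.1.2 = z.2.2 ∧ ¬(z.1.2 = z.1.1) ∧ ¬(z.1.2 = z.2.1) ∧ ¬(z.1.1 = z.2.1)))
    (t := (F ×ˢ F) ×ˢ F) ?_ ?_
  · calc _ ≤ ((F ×ˢ F) ×ˢ F).card := this
    _ = F.card ^ 3 := by simp [Finset.card_product]; ring
  · intro z hz
    simp only [mem_coe, mem_filter, mem_product] at hz ⊢
    exact ⟨⟨hz.1.1.1, hz.1.1.2⟩, hz.1.2.1⟩
  · intro z1 h1 z2 h2 heq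
    simp only [coe_filter, Set.mem_setOf_eq, mem_product] at h1 h2
    simp only [Prod.mk.injEq] at heq
    obtain ⟨e12, e3⟩ := heq
    refine Prod.ext e12 (Prod.ext e3 ?_)
    rw [← h1.2.1, ← h2.2.1, e12]

end BMcount

def bmE {α : Type*} (a b a' b' : α × α) : Fin 6 → α × α :=
  ![(a.1, a.2), (a.2, b.1), (a.1, b.2), (a'.1, a'.2), (a'.2, b'.1), (a'.1, b'.2)]

section
variable {α : Type*} (a b a' b' : α × α)
@[simp] lemma bmE0 : bmE a b a' b' 0 = (a.1, a.2) := rfl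
@[simp] lemma bmE1 : bmE a b a' b' 1 = (a.2, b.1) := rfl
@[simp] lemma bmE2 : bmE a b a' b' 2 = (a.1, b.2) := rfl
@[simp] lemma bmE3 : bmE a b a' b' 3 = (a'.1, a'.2) := rfl
@[simp] lemma bmE4 : bmE a b a' b' 4 = (a'.2, b'.1) := rfl
@[simp] lemma bmE5 : bmE a b a' b' 5 = (a'.1, b'.2) := rfl
end

theorem bm_main {Ω : Type} [MeasurableSpace Ω] {P : Measure Ω} [IsProbabilityMeasure P]
    {N K : ℕ} (hKN : K ≤ N)
    (X : Fin N × Fin N → Ω → ℝ)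
    (hX : ∀ q, Measurable (X q))
    (hindep : iIndepFun X P)
    (hbd : ∀ q, ∀ᵐ ω ∂P, |X q ω| ≤ 1)
    (hzero : ∀ q, ∫ ω, X q ω ∂P = 0) :
    ∫ ω, (∑ i ∈ univ.filter (fun i : Fin N => (i : ℕ) < K),
        ∑ j ∈ univ.filter (fun j : Fin N => (j : ℕ) < K),
        ∑ m : Fin N, ∑ n : Fin N,
          X (i, j) ω * X (j, m) ω * X (i, n) ω) ^ 2 ∂P
      ≤ 2049 * (K:ℝ)^2 * (N:ℝ)^2 := by
  classical
  set F : Finset (Fin N) := univ.filter (fun i : Fin N => (i : ℕ) < K) with hF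
  have hFcard : F.card ≤ K := by
    calc F.card ≤ (Finset.range K).card := by
          apply Finset.card_le_card_of_injOn (fun i : Fin N => (i : ℕ))
          · intro i hi; simp only [hF, mem_coe, mem_filter, mem_univ, true_and] at hi
            exact Finset.mem_range.2 hi
          · intro i _ j _ h; exact Fin.ext h
    _ = K := Finset.card_range K
  -- the elementary term
  set T : (Fin N × Fin N) → (Fin N × Fin N) → (Fin N × Fin N) → (Fin N × Fin N) → ℝ :=
    fun a b a' b' => ∫ ω, ∏ k, X (bmE a b a' b' k) ω ∂P with hT
  have hintE : ∀ f : Fin 6 → Fin N × Fin N, Integrable (fun ω => ∏ k, X (f k) ω) P :=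
    fun f => bm_integrable_prod (fun k => hX (f k)) (fun k => hbd (f k)) Finset.univ
  -- Step A : expansion
  have hexp : ∫ ω, (∑ i ∈ F, ∑ j ∈ F, ∑ m : Fin N, ∑ n : Fin N,
        X (i, j) ω * X (j, m) ω * X (i, n) ω) ^ 2 ∂P
      = ∑ a ∈ F ×ˢ F, ∑ a' ∈ F ×ˢ F, ∑ b : Fin N × Fin N, ∑ b' : Fin N × Fin N,
          T a b a' b' := by
    have hS : ∀ ω, (∑ i ∈ F, ∑ j ∈ F, ∑ m : Fin N, ∑ n : Fin N,
        X (i, j) ω * X (j, m) ω * X (i, n) ω)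
        = ∑ a ∈ F ×ˢ F, ∑ b : Fin N × Fin N,
            X (a.1, a.2) ω * X (a.2, b.1) ω * X (a.1, b.2) ω := by
      intro ω
      rw [Finset.sum_product]
      refine Finset.sum_congr rfl fun i _ => Finset.sum_congr rfl fun j _ => ?_
      exact (Fintype.sum_prod_type (fun b : Fin N × Fin N =>
        X (i, j) ω * X (j, b.1) ω * X (i, b.2) ω)).symm
    have hsq : ∀ ω, (∑ i ∈ F, ∑ j ∈ F, ∑ m : Fin N, ∑ n : Fin N,
        X (i, j) ω * X (j, m) ω * X (i, n) ω) ^ 2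
        = ∑ a ∈ F ×ˢ F, ∑ a' ∈ F ×ˢ F, ∑ b : Fin N × Fin N, ∑ b' : Fin N × Fin N,
            ∏ k, X (bmE a b a' b' k) ω := by
      intro ω
      rw [hS ω, sq, Finset.sum_mul_sum]
      refine Finset.sum_congr rfl fun a _ => Finset.sum_congr rfl fun a' _ => ?_
      rw [Finset.sum_mul_sum]
      refine Finset.sum_congr rfl fun b _ => Finset.sum_congr rfl fun b' _ => ?_
      rw [Fin.prod_univ_six, bmE0, bmE1, bmE2, bmE3, bmE4, bmE5]
      ring
    calc ∫ ω, (∑ i ∈ F, ∑ j ∈ F, ∑ m : Fin N, ∑ n : Fin N,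
          X (i, j) ω * X (j, m) ω * X (i, n) ω) ^ 2 ∂P
        = ∫ ω, ∑ a ∈ F ×ˢ F, ∑ a' ∈ F ×ˢ F, ∑ b : Fin N × Fin N, ∑ b' : Fin N × Fin N,
            ∏ k, X (bmE a b a' b' k) ω ∂P := by
          congr 1; funext ω; exact hsq ω
    _ = ∑ a ∈ F ×ˢ F, ∑ a' ∈ F ×ˢ F, ∑ b : Fin N × Fin N, ∑ b' : Fin N × Fin N,
          T a b a' b' := by
        rw [integral_finset_sum _ (fun a _ => integrable_finset_sum _
          (fun a' _ => integrable_finset_sum _ (fun b _ => integrable_finset_sum _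
            (fun b' _ => hintE _))))]
        refine Finset.sum_congr rfl fun a _ => ?_
        rw [integral_finset_sum _ (fun a' _ => integrable_finset_sum _
          (fun b _ => integrable_finset_sum _ (fun b' _ => hintE _)))]
        refine Finset.sum_congr rfl fun a' _ => ?_
        rw [integral_finset_sum _ (fun b _ => integrable_finset_sum _ (fun b' _ => hintE _))]
        refine Finset.sum_congr rfl fun b _ => ?_
        rw [integral_finset_sum _ (fun b' _ => hintE _)]

  -- per-term facts
  have hTbound : ∀ a b a' b' : Fin N × Fin N, |T a b a' b'| ≤ 1 :=
    fun a b a' b' => bm_Tbound hX hbd _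
  have hTzero : ∀ (a b a' b' : Fin N × Fin N) (k : Fin 6),
      (∀ k', bmE a b a' b' k' = bmE a b a' b' k → k' = k) → T a b a' b' = 0 :=
    fun a b a' b' k hk => bm_Tzero hX hindep hbd hzero _ k hk
  -- generic bound on the inner double sum
  have hGA : ∀ a a' : Fin N × Fin N,
      |∑ b : Fin N × Fin N, ∑ b' : Fin N × Fin N, T a b a' b'| ≤ 256 * (N:ℝ)^2 := by
    intro a a'
    have h1 : (∑ b : Fin N × Fin N, ∑ b' : Fin N × Fin N, T a b a' b')
        = ∑ z : (Fin N × Fin N) × (Fin N × Fin N), T a z.1 a' z.2 :=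
      (Fintype.sum_prod_type (fun z : (Fin N × Fin N) × (Fin N × Fin N) =>
        T a z.1 a' z.2)).symm
    have hz0 : ∀ z : (Fin N × Fin N) × (Fin N × Fin N),
        ¬((z.1.1 = a.2 ∨ z.1.1 = a'.2 ∨ z.1.1 = z.1.2 ∨ z.1.1 = z.2.1 ∨ z.1.1 = z.2.2) ∧
          (z.1.2 = a.2 ∨ z.1.2 = a'.2 ∨ z.1.2 = z.1.1 ∨ z.1.2 = z.2.1 ∨ z.1.2 = z.2.2) ∧
          (z.2.1 = a.2 ∨ z.2.1 = a'.2 ∨ z.2.1 = z.1.1 ∨ z.2.1 = z.1.2 ∨ z.2.1 = z.2.2) ∧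
          (z.2.2 = a.2 ∨ z.2.2 = a'.2 ∨ z.2.2 = z.1.1 ∨ z.2.2 = z.1.2 ∨ z.2.2 = z.2.1)) →
        T a z.1 a' z.2 = 0 := by
      rintro ⟨b, b'⟩ hc
      rw [not_and_or, not_and_or, not_and_or] at hc
      rcases hc with hc | hc | hc | hc
      · push_neg at hc
        obtain ⟨g1, g2, g3, g4, g5⟩ := hc
        apply hTzero _ _ _ _ 1
        intro k' hk'
        fin_cases k' <;> simp [Prod.ext_iff] at hk' ⊢
        · exact absurd hk'.2.symm g1
        · exact absurd hk'.2.symm g3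
        · exact absurd hk'.2.symm g2
        · exact absurd hk'.2.symm g4
        · exact absurd hk'.2.symm g5
      · push_neg at hc
        obtain ⟨g1, g2, g3, g4, g5⟩ := hc
        apply hTzero _ _ _ _ 2
        intro k' hk'
        fin_cases k' <;> simp [Prod.ext_iff] at hk' ⊢
        · exact absurd hk'.symm g1
        · exact absurd hk'.2.symm g3
        · exact absurd hk'.2.symm g2
        · exact absurd hk'.2.symm g4
        · exact absurd hk'.2.symm g5
      · push_neg at hc
        obtain ⟨g1, g2, g3, g4, g5⟩ := hc
        apply hTzero _ _ _ _ 4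
        intro k' hk'
        fin_cases k' <;> simp [Prod.ext_iff] at hk' ⊢
        · exact absurd hk'.2.symm g1
        · exact absurd hk'.2.symm g3
        · exact absurd hk'.2.symm g4
        · exact absurd hk'.2.symm g2
        · exact absurd hk'.2.symm g5
      · push_neg at hc
        obtain ⟨g1, g2, g3, g4, g5⟩ := hc
        apply hTzero _ _ _ _ 5
        intro k' hk'
        fin_cases k' <;> simp [Prod.ext_iff] at hk' ⊢
        · exact absurd hk'.2.symm g1
        · exact absurd hk'.2.symm g3
        · exact absurd hk'.2.symm g4
        · exact absurd hk'.symm g2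
        · exact absurd hk'.2.symm g5
    calc |∑ b : Fin N × Fin N, ∑ b' : Fin N × Fin N, T a b a' b'|
        = |∑ z : (Fin N × Fin N) × (Fin N × Fin N), T a z.1 a' z.2| := by rw [h1]
    _ ≤ ∑ z : (Fin N × Fin N) × (Fin N × Fin N), |T a z.1 a' z.2| :=
        Finset.abs_sum_le_sum_abs _ _
    _ ≤ ∑ z : (Fin N × Fin N) × (Fin N × Fin N),
          (if ((z.1.1 = a.2 ∨ z.1.1 = a'.2 ∨ z.1.1 = z.1.2 ∨ z.1.1 = z.2.1 ∨ z.1.1 = z.2.2) ∧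
          (z.1.2 = a.2 ∨ z.1.2 = a'.2 ∨ z.1.2 = z.1.1 ∨ z.1.2 = z.2.1 ∨ z.1.2 = z.2.2) ∧
          (z.2.1 = a.2 ∨ z.2.1 = a'.2 ∨ z.2.1 = z.1.1 ∨ z.2.1 = z.1.2 ∨ z.2.1 = z.2.2) ∧
          (z.2.2 = a.2 ∨ z.2.2 = a'.2 ∨ z.2.2 = z.1.1 ∨ z.2.2 = z.1.2 ∨ z.2.2 = z.2.1))
          then (1:ℝ) else 0) := by
        refine Finset.sum_le_sum fun z _ => ?_
        split_ifs with hcz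
        · exact hTbound _ _ _ _
        · rw [hz0 z hcz]; simp
    _ = ((((univ : Finset ((Fin N × Fin N) × (Fin N × Fin N))).filter
          (fun z : (Fin N × Fin N) × (Fin N × Fin N) =>
          (z.1.1 = a.2 ∨ z.1.1 = a'.2 ∨ z.1.1 = z.1.2 ∨ z.1.1 = z.2.1 ∨ z.1.1 = z.2.2) ∧
          (z.1.2 = a.2 ∨ z.1.2 = a'.2 ∨ z.1.2 = z.1.1 ∨ z.1.2 = z.2.1 ∨ z.1.2 = z.2.2) ∧
          (z.2.1 = a.2 ∨ z.2.1 = a'.2 ∨ z.2.1 = z.1.1 ∨ z.2.1 = z.1.2 ∨ z.2.1 = z.2.2) ∧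
          (z.2.2 = a.2 ∨ z.2.2 = a'.2 ∨ z.2.2 = z.1.1 ∨ z.2.2 = z.1.2 ∨ z.2.2 = z.2.1))).card)
          : ℝ) := by
        rw [Finset.sum_boole]
    _ ≤ ((256 * N^2 : ℕ) : ℝ) := by
        have := bm_cardU (α := Fin N) a.2 a'.2
        rw [Fintype.card_fin] at this
        exact_mod_cast this
    _ = 256 * (N:ℝ)^2 := by push_cast; ring
  -- case B bound
  have hGB : ∀ a a' : Fin N × Fin N, a.2 = a'.2 → ¬(a.2 = a.1) → ¬(a.2 = a'.1) →
      ¬(a.1 = a'.1) →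
      |∑ b : Fin N × Fin N, ∑ b' : Fin N × Fin N, T a b a' b'| ≤ (N:ℝ) := by
    intro a a' hjj' hji hji' hii'
    have h1 : (∑ b : Fin N × Fin N, ∑ b' : Fin N × Fin N, T a b a' b')
        = ∑ z : (Fin N × Fin N) × (Fin N × Fin N), T a z.1 a' z.2 :=
      (Fintype.sum_prod_type (fun z : (Fin N × Fin N) × (Fin N × Fin N) =>
        T a z.1 a' z.2)).symm
    have hz0 : ∀ z : (Fin N × Fin N) × (Fin N × Fin N),
        ¬(z.1.2 = a.2 ∧ z.2.2 = a.2 ∧ z.2.1 = z.1.1) → T a z.1 a' z.2 = 0 := by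
      rintro ⟨b, b'⟩ hc
      rw [not_and_or, not_and_or] at hc
      rcases hc with hc | hc | hc
      · apply hTzero _ _ _ _ 2
        intro k' hk'
        fin_cases k' <;> simp [Prod.ext_iff] at hk' ⊢
        · exact absurd hk'.symm hc
        · exact absurd hk'.1 hji
        · exact absurd hk'.1.symm hii'
        · exact absurd (hjj'.trans hk'.1) hji
        · exact absurd hk'.1.symm hii'
      · apply hTzero _ _ _ _ 5
        intro k' hk'
        fin_cases k' <;> simp [Prod.ext_iff] at hk' ⊢
        · exact absurd hk'.1 hii'
        · exact absurd hk'.1 hji'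
        · exact absurd hk'.1 hii'
        · exact absurd (hk'.symm.trans hjj'.symm) hc
        · exact absurd (hjj'.trans hk'.1) hji'
      · apply hTzero _ _ _ _ 1
        intro k' hk'
        fin_cases k' <;> simp [Prod.ext_iff] at hk' ⊢
        · exact absurd hk'.1.symm hji
        · exact absurd hk'.1.symm hji
        · exact absurd hk'.1.symm hji'
        · exact absurd hk'.2 hc
        · exact absurd hk'.1.symm hji'
    calc |∑ b : Fin N × Fin N, ∑ b' : Fin N × Fin N, T a b a' b'|
        = |∑ z : (Fin N × Fin N) × (Fin N × Fin N), T a z.1 a' z.2| := by rw [h1]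
    _ ≤ ∑ z : (Fin N × Fin N) × (Fin N × Fin N), |T a z.1 a' z.2| :=
        Finset.abs_sum_le_sum_abs _ _
    _ ≤ ∑ z : (Fin N × Fin N) × (Fin N × Fin N),
          (if (z.1.2 = a.2 ∧ z.2.2 = a.2 ∧ z.2.1 = z.1.1) then (1:ℝ) else 0) := by
        refine Finset.sum_le_sum fun z _ => ?_
        split_ifs with hcz
        · exact hTbound _ _ _ _
        · rw [hz0 z hcz]; simp
    _ = ((((univ : Finset ((Fin N × Fin N) × (Fin N × Fin N))).filter
          (fun z : (Fin N × Fin N) × (Fin N × Fin N) =>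
          z.1.2 = a.2 ∧ z.2.2 = a.2 ∧ z.2.1 = z.1.1)).card) : ℝ) := by
        rw [Finset.sum_boole]
    _ ≤ (N:ℝ) := by
        have := bm_cardLine (α := Fin N) a.2
        rw [Fintype.card_fin] at this
        exact_mod_cast this
  -- vanishing case
  have hG0 : ∀ a a' : Fin N × Fin N,
      ¬((a.2 = a.1 ∨ a.2 = a'.1 ∨ a.2 = a'.2) ∧ (a'.2 = a.1 ∨ a'.2 = a.2 ∨ a'.2 = a'.1)) →
      (∑ b : Fin N × Fin N, ∑ b' : Fin N × Fin N, T a b a' b') = 0 := by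
    intro a a' hc
    refine Finset.sum_eq_zero fun b _ => Finset.sum_eq_zero fun b' _ => ?_
    rw [not_and_or] at hc
    rcases hc with hc | hc
    · push_neg at hc
      obtain ⟨g1, g2, g3⟩ := hc
      apply hTzero _ _ _ _ 1
      intro k' hk'
      fin_cases k' <;> simp [Prod.ext_iff] at hk' ⊢
      · exact absurd hk'.1.symm g1
      · exact absurd hk'.1.symm g1
      · exact absurd hk'.1.symm g2
      · exact absurd hk'.1.symm g3
      · exact absurd hk'.1.symm g2
    · push_neg at hc
      obtain ⟨g1, g2, g3⟩ := hc
      apply hTzero _ _ _ _ 4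
      intro k' hk'
      fin_cases k' <;> simp [Prod.ext_iff] at hk' ⊢
      · exact absurd hk'.1.symm g1
      · exact absurd hk'.1.symm g2
      · exact absurd hk'.1.symm g1
      · exact absurd hk'.1.symm g3
      · exact absurd hk'.1.symm g3
  -- combination
  rw [hexp]
  have hper : ∀ a ∈ F ×ˢ F, ∀ a' ∈ F ×ˢ F,
      (∑ b : Fin N × Fin N, ∑ b' : Fin N × Fin N, T a b a' b')
      ≤ (if ((a.2 = a.1 ∨ a.2 = a'.1) ∧ (a'.2 = a.1 ∨ a'.2 = a'.1)) ∨
          (a.1 = a'.1 ∧ a.2 = a'.2) then 256 * (N:ℝ)^2 else 0)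
        + (if a.2 = a'.2 ∧ ¬(a.2 = a.1) ∧ ¬(a.2 = a'.1) ∧ ¬(a.1 = a'.1)
          then (N:ℝ) else 0) := by
    intro a _ a' _
    have hB0 : (0:ℝ) ≤ if a.2 = a'.2 ∧ ¬(a.2 = a.1) ∧ ¬(a.2 = a'.1) ∧ ¬(a.1 = a'.1)
        then (N:ℝ) else 0 := by
      split_ifs
      · exact Nat.cast_nonneg _
      · exact le_refl 0
    by_cases hA : ((a.2 = a.1 ∨ a.2 = a'.1) ∧ (a'.2 = a.1 ∨ a'.2 = a'.1)) ∨
        (a.1 = a'.1 ∧ a.2 = a'.2)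
    · rw [if_pos hA]
      have h2 := le_trans (le_abs_self _) (hGA a a')
      linarith
    · by_cases hB : a.2 = a'.2 ∧ ¬(a.2 = a.1) ∧ ¬(a.2 = a'.1) ∧ ¬(a.1 = a'.1)
      · rw [if_neg hA, if_pos hB]
        have h2 := le_trans (le_abs_self _) (hGB a a' hB.1 hB.2.1 hB.2.2.1 hB.2.2.2)
        linarith
      · rw [if_neg hA, if_neg hB]
        have h0 : (∑ b : Fin N × Fin N, ∑ b' : Fin N × Fin N, T a b a' b') = 0 := by
          apply hG0
          rintro ⟨hj, hj'⟩
          rcases hj with h | h | h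
          · apply hA; left
            refine ⟨Or.inl h, ?_⟩
            rcases hj' with g | g | g
            · exact Or.inl g
            · exact Or.inl (g.trans h)
            · exact Or.inr g
          · apply hA; left
            refine ⟨Or.inr h, ?_⟩
            rcases hj' with g | g | g
            · exact Or.inl g
            · exact Or.inr (g.trans h)
            · exact Or.inr g
          · by_cases hi : a.1 = a'.1
            · exact hA (Or.inr ⟨hi, h⟩)
            · by_cases e1 : a.2 = a.1
              · apply hA; left
                refine ⟨Or.inl e1, ?_⟩
                rcases hj' with g | g | g
                · exact Or.inl g
                · exact Or.inl (g.trans e1)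
                · exact Or.inr g
              · by_cases e2 : a.2 = a'.1
                · apply hA; left
                  refine ⟨Or.inr e2, ?_⟩
                  rcases hj' with g | g | g
                  · exact Or.inl g
                  · exact Or.inr (g.trans e2)
                  · exact Or.inr g
                · exact hB ⟨h, e1, e2, hi⟩
        rw [h0]
        norm_num
  have hsum1 := Finset.sum_le_sum (s := F ×ˢ F)
    (fun a (ha : a ∈ F ×ˢ F) => Finset.sum_le_sum (fun a' ha' => hper a ha a' ha'))
  refine le_trans hsum1 ?_
  have hrw : (∑ a ∈ F ×ˢ F, ∑ a' ∈ F ×ˢ F,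
      ((if ((a.2 = a.1 ∨ a.2 = a'.1) ∧ (a'.2 = a.1 ∨ a'.2 = a'.1)) ∨
          (a.1 = a'.1 ∧ a.2 = a'.2) then 256 * (N:ℝ)^2 else 0)
        + (if a.2 = a'.2 ∧ ¬(a.2 = a.1) ∧ ¬(a.2 = a'.1) ∧ ¬(a.1 = a'.1)
          then (N:ℝ) else 0)))
      = ∑ z ∈ (F ×ˢ F) ×ˢ (F ×ˢ F),
      ((if ((z.1.2 = z.1.1 ∨ z.1.2 = z.2.1) ∧ (z.2.2 = z.1.1 ∨ z.2.2 = z.2.1)) ∨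
          (z.1.1 = z.2.1 ∧ z.1.2 = z.2.2) then 256 * (N:ℝ)^2 else 0)
        + (if z.1.2 = z.2.2 ∧ ¬(z.1.2 = z.1.1) ∧ ¬(z.1.2 = z.2.1) ∧ ¬(z.1.1 = z.2.1)
          then (N:ℝ) else 0)) :=
    (Finset.sum_product' (s := F ×ˢ F) (t := F ×ˢ F) (f := fun (a a' : Fin N × Fin N) =>
      ((if ((a.2 = a.1 ∨ a.2 = a'.1) ∧ (a'.2 = a.1 ∨ a'.2 = a'.1)) ∨
          (a.1 = a'.1 ∧ a.2 = a'.2) then 256 * (N:ℝ)^2 else 0)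
        + (if a.2 = a'.2 ∧ ¬(a.2 = a.1) ∧ ¬(a.2 = a'.1) ∧ ¬(a.1 = a'.1)
          then (N:ℝ) else 0)))).symm
  rw [hrw, Finset.sum_add_distrib]
  have hAsum : (∑ z ∈ (F ×ˢ F) ×ˢ (F ×ˢ F),
      (if ((z.1.2 = z.1.1 ∨ z.1.2 = z.2.1) ∧ (z.2.2 = z.1.1 ∨ z.2.2 = z.2.1)) ∨
          (z.1.1 = z.2.1 ∧ z.1.2 = z.2.2) then 256 * (N:ℝ)^2 else 0))
      ≤ (8 * (K:ℝ)^2) * (256 * (N:ℝ)^2) := by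
    rw [← Finset.sum_filter, Finset.sum_const, nsmul_eq_mul]
    have hcard : ((((F ×ˢ F) ×ˢ (F ×ˢ F)).filter
        (fun z => ((z.1.2 = z.1.1 ∨ z.1.2 = z.2.1) ∧ (z.2.2 = z.1.1 ∨ z.2.2 = z.2.1)) ∨
          (z.1.1 = z.2.1 ∧ z.1.2 = z.2.2))).card : ℝ) ≤ 8 * (K:ℝ)^2 := by
      have h1 := bm_cardA F
      have h2 : 8 * F.card^2 ≤ 8 * K^2 :=
        Nat.mul_le_mul_left _ (Nat.pow_le_pow_left hFcard 2)
      have := le_trans h1 h2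
      calc ((((F ×ˢ F) ×ˢ (F ×ˢ F)).filter
          (fun z => ((z.1.2 = z.1.1 ∨ z.1.2 = z.2.1) ∧ (z.2.2 = z.1.1 ∨ z.2.2 = z.2.1)) ∨
            (z.1.1 = z.2.1 ∧ z.1.2 = z.2.2))).card : ℝ) ≤ ((8 * K^2 : ℕ) : ℝ) :=
          Nat.cast_le.2 this
      _ = 8 * (K:ℝ)^2 := by push_cast; ring
    have hpos : (0:ℝ) ≤ 256 * (N:ℝ)^2 := by positivity
    exact mul_le_mul_of_nonneg_right hcard hpos
  have hBsum : (∑ z ∈ (F ×ˢ F) ×ˢ (F ×ˢ F),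
      (if z.1.2 = z.2.2 ∧ ¬(z.1.2 = z.1.1) ∧ ¬(z.1.2 = z.2.1) ∧ ¬(z.1.1 = z.2.1)
        then (N:ℝ) else 0)) ≤ (K:ℝ)^3 * (N:ℝ) := by
    rw [← Finset.sum_filter, Finset.sum_const, nsmul_eq_mul]
    have hcard : ((((F ×ˢ F) ×ˢ (F ×ˢ F)).filter
        (fun z => z.1.2 = z.2.2 ∧ ¬(z.1.2 = z.1.1) ∧ ¬(z.1.2 = z.2.1) ∧
          ¬(z.1.1 = z.2.1))).card : ℝ) ≤ (K:ℝ)^3 := by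
      have h1 := bm_cardB F
      have h2 : F.card^3 ≤ K^3 := Nat.pow_le_pow_left hFcard 3
      have := le_trans h1 h2
      calc ((((F ×ˢ F) ×ˢ (F ×ˢ F)).filter
          (fun z => z.1.2 = z.2.2 ∧ ¬(z.1.2 = z.1.1) ∧ ¬(z.1.2 = z.2.1) ∧
            ¬(z.1.1 = z.2.1))).card : ℝ) ≤ ((K^3 : ℕ) : ℝ) := Nat.cast_le.2 this
      _ = (K:ℝ)^3 := by push_cast; ring
    exact mul_le_mul_of_nonneg_right hcard (Nat.cast_nonneg _)
  have hKR : (K:ℝ) ≤ (N:ℝ) := Nat.cast_le.2 hKN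
  have hK0 : (0:ℝ) ≤ (K:ℝ) := Nat.cast_nonneg _
  have hN0 : (0:ℝ) ≤ (N:ℝ) := Nat.cast_nonneg _
  have hlast : (K:ℝ)^3 * (N:ℝ) ≤ (K:ℝ)^2 * (N:ℝ)^2 := by
    have h := mul_le_mul_of_nonneg_right hKR (by positivity : (0:ℝ) ≤ (K:ℝ)^2 * (N:ℝ))
    calc (K:ℝ)^3 * (N:ℝ) = (K:ℝ) * ((K:ℝ)^2 * (N:ℝ)) := by ring
    _ ≤ (N:ℝ) * ((K:ℝ)^2 * (N:ℝ)) := h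
    _ = (K:ℝ)^2 * (N:ℝ)^2 := by ring
  nlinarith [hAsum, hBsum, hlast]


/-- There is C depending only on p such that for (θ_{ij}) i.i.d. Bernoulli(p) and K ≤ N,
E[(Σ_{i≤K} Σ_{j≤K} Σ_m Σ_n (θ_{ij}−p)(θ_{jm}−p)(θ_{in}−p))²] ≤ C K² N². -/
theorem stmt19 (p : ℝ) (hp : p ∈ Set.Icc (0:ℝ) 1) :
    ∃ C > 0, ∀ (N K : ℕ), 1 ≤ K → K ≤ N →
    ∀ (Ω : Type) (_mΩ : MeasurableSpace Ω) (P : Measure Ω) (_ : IsProbabilityMeasure P)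
      (θ : Fin N × Fin N → Ω → ℝ),
      (∀ ij, Measurable (θ ij)) →
      iIndepFun θ P →
      (∀ ij, P.map (θ ij) = bernoulliLaw p) →
      (∫ ω, (∑ i ∈ univ.filter (fun i : Fin N => (i : ℕ) < K),
          ∑ j ∈ univ.filter (fun j : Fin N => (j : ℕ) < K),
          ∑ m : Fin N, ∑ n : Fin N,
            (θ (i, j) ω - p) * (θ (j, m) ω - p) * (θ (i, n) ω - p)) ^ 2 ∂P)
        ≤ C * (K : ℝ) ^ 2 * (N : ℝ) ^ 2 := by
  obtain ⟨hp0, hp1⟩ := hp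
  refine ⟨2049, by norm_num, ?_⟩
  intro N K hK hKN Ω mΩ P hP θ hθ hindep hlaw
  set X : Fin N × Fin N → Ω → ℝ := fun q ω => θ q ω - p with hXdef
  have hXmeas : ∀ q, Measurable (X q) := fun q => (hθ q).sub measurable_const
  have hXindep : iIndepFun X P := by
    have := hindep.comp (fun _ (x : ℝ) => x - p)
      (fun _ => measurable_id.sub measurable_const)
    exact this
  -- a.e. boundedness
  have hset : MeasurableSet ({0, 1} : Set ℝ) :=
    (measurableSet_singleton (1:ℝ)).insert 0
  have hbern : (bernoulliLaw p) ({0, 1} : Set ℝ)ᶜ = 0 := by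
    rw [bernoulliLaw]
    rw [Measure.add_apply, Measure.smul_apply, Measure.smul_apply,
      Measure.dirac_apply' _ hset.compl, Measure.dirac_apply' _ hset.compl]
    have h1 : (1:ℝ) ∈ ({0, 1} : Set ℝ) := by simp
    have h0 : (0:ℝ) ∈ ({0, 1} : Set ℝ) := by simp
    rw [Set.indicator_of_notMem (by simpa using h1), Set.indicator_of_notMem (by simpa using h0)]
    simp
  have hbd : ∀ q, ∀ᵐ ω ∂P, |X q ω| ≤ 1 := by
    intro q
    have hmap : P (θ q ⁻¹' ({0, 1} : Set ℝ)ᶜ) = 0 := by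
      have := Measure.map_apply (μ := P) (hθ q) hset.compl
      rw [hlaw q] at this
      rw [← this, hbern]
    have hae : ∀ᵐ ω ∂P, θ q ω ∈ ({0, 1} : Set ℝ) := by
      rw [ae_iff]
      convert hmap using 2
      rfl
    filter_upwards [hae] with ω hω
    have hcase : θ q ω = 0 ∨ θ q ω = 1 := by simpa using hω
    simp only [hXdef]
    rcases hcase with h | h <;> rw [h] <;> rw [abs_le] <;> constructor <;> linarith
  -- zero mean
  have hzero : ∀ q, ∫ ω, X q ω ∂P = 0 := by
    intro q
    have hmeas : Measurable (fun x : ℝ => x - p) := measurable_id.sub measurable_const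
    have h1 : ∫ ω, X q ω ∂P = ∫ x, (x - p) ∂(P.map (θ q)) := by
      rw [integral_map (hθ q).aemeasurable hmeas.aestronglyMeasurable]
    rw [h1, hlaw q, bernoulliLaw]
    have hint1 : Integrable (fun x : ℝ => x - p) (Measure.dirac (1:ℝ)) :=
      (integrable_const ((1:ℝ) - p)).congr (ae_eq_dirac (fun x : ℝ => x - p)).symm
    have hint0 : Integrable (fun x : ℝ => x - p) (Measure.dirac (0:ℝ)) :=
      (integrable_const ((0:ℝ) - p)).congr (ae_eq_dirac (fun x : ℝ => x - p)).symm
    rw [integral_add_measure (hint1.smul_measure ENNReal.ofReal_ne_top)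
      (hint0.smul_measure ENNReal.ofReal_ne_top),
      integral_smul_measure, integral_smul_measure, integral_dirac, integral_dirac,
      ENNReal.toReal_ofReal hp0, ENNReal.toReal_ofReal (by linarith : (0:ℝ) ≤ 1 - p)]
    simp only [smul_eq_mul]
    ring
  exact bm_main hKN X hXmeas hXindep hbd hzero
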